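/- The maps z ↦ w_{t,r}(rz)/r^{1+t}, restricted to the annulus 𝔸(1/r,1) = {1/r < |z| < 1}, converge uniformly as t → ∞ to the homeomorphism w : 𝔸(1/r,1) → 𝔻* given by: w(z) = z if √(1/r) ≤ |z| < 1; and for 1/r < |z| < √(1/r), arg w(z) = arg z and log|w(z)| = −½(1 + log(log r / (2 log(r|z|)))) log r. -/

import Mathlib

noncomputable section

open Set

/-- The radial profile of the pinching model for `x ≥ 0`. -/
def varrhoPos (r t x : ℝ) : ℝ := by
  classical exact
    if x ≤ Real.log r / (2 * Real.exp (2 * t)) then Real.exp (2 * t) * x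
    else if x < Real.log r / 2 then
      (Real.log (2 * x / Real.log r) + 1 + 2 * t) * Real.log r / 2
    else x + t * Real.log r

/-- The radial profile `ϱ_t`, extended as an odd function. -/
def varrho (r t x : ℝ) : ℝ := by
  classical exact if 0 ≤ x then varrhoPos r t x else - varrhoPos r t (-x)

/-- The pinching model homeomorphism `w_{t,r}`. -/
def pinch (r t : ℝ) (z : ℂ) : ℂ := by
  classical exact
    if z = 0 then 0
    else ((Real.exp (varrho r t (Real.log (‖z‖))) / ‖z‖ : ℝ) : ℂ) * z

/-- The limit map `w : 𝔸(1/r,1) → 𝔻*` of the rescaled pinching models. -/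
def wlim (r : ℝ) (z : ℂ) : ℂ := by
  classical exact
    if Real.sqrt (1 / r) ≤ ‖z‖ then z
    else ((Real.exp (-(1 + Real.log (Real.log r / (2 * Real.log (r * ‖z‖)))) *
      Real.log r / 2) / ‖z‖ : ℝ) : ℂ) * z

/-- The annulus `{a < |z| < b}`. -/
def ann (a b : ℝ) : Set ℂ := {z : ℂ | a < ‖z‖ ∧ ‖z‖ < b}

namespace PMLaux


def H (r x : ℝ) : ℝ :=
  if Real.log r / 2 ≤ x then x - Real.log r
  else (Real.log (2 * x / Real.log r) - 1) * Real.log r / 2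

lemma inner_lt {r x : ℝ} (hL : 0 < Real.log r) (hx : 0 < x) (hx2 : x < Real.log r / 2) :
    (Real.log (2 * x / Real.log r) - 1) * Real.log r / 2 < -(Real.log r) / 2 := by
  have h1 : 2 * x / Real.log r < 1 := by rw [div_lt_one hL]; linarith
  have h0 : 0 < 2 * x / Real.log r := by positivity
  have := Real.log_neg h0 h1
  nlinarith

lemma H_neg {r x : ℝ} (hL : 0 < Real.log r) (hx : x ∈ Ioo 0 (Real.log r)) : H r x < 0 := by
  unfold H; split_ifs with h
  · linarith [hx.2]
  · push_neg at h
    linarith [inner_lt hL hx.1 h]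

lemma H_mono {r : ℝ} (hL : 0 < Real.log r) : StrictMonoOn (H r) (Ioo 0 (Real.log r)) := by
  intro x hx y hy hxy
  unfold H
  split_ifs with h1 h2 h2
  · linarith
  · linarith
  · push_neg at h1
    have := inner_lt hL hx.1 h1
    linarith
  · push_neg at h1 h2
    have h0x : 0 < 2 * x / Real.log r := by have := hx.1; positivity
    have hlt : 2 * x / Real.log r < 2 * y / Real.log r := by
      apply div_lt_div_of_pos_right ?_ hL
      linarith
    have := Real.log_lt_log h0x hlt
    nlinarith

lemma H_surj {r c : ℝ} (hL : 0 < Real.log r) (hc : c < 0) :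
    ∃ x ∈ Ioo 0 (Real.log r), H r x = c := by
  set L := Real.log r with hLdef
  rcases le_or_gt (-(L/2)) c with h | h
  · refine ⟨c + L, ⟨by linarith, by linarith⟩, ?_⟩
    unfold H
    rw [if_pos (by linarith)]
    ring
  · refine ⟨L/2 * Real.exp (2*c/L + 1), ⟨by positivity, ?_⟩, ?_⟩
    · have he : Real.exp (2*c/L + 1) < 1 := by
        rw [Real.exp_lt_one_iff]
        have : 2*c/L < -1 := by
          rw [div_lt_iff₀ hL]
          nlinarith
        linarith
      nlinarith
    · have he : Real.exp (2*c/L + 1) < 1 := by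
        rw [Real.exp_lt_one_iff]
        have : 2*c/L < -1 := by
          rw [div_lt_iff₀ hL]
          nlinarith
        linarith
      unfold H
      rw [if_neg (by nlinarith)]
      have harg : 2 * (L/2 * Real.exp (2*c/L + 1)) / L = Real.exp (2*c/L + 1) := by
        field_simp
      rw [harg, Real.log_exp]
      field_simp
      rw [← hLdef]; ring

lemma H_cont {r : ℝ} (hL : 0 < Real.log r) : ContinuousOn (H r) (Ioo 0 (Real.log r)) := by
  set L := Real.log r with hLdef
  unfold H
  apply ContinuousOn.if
  · intro a ha
    have hfr : frontier {a : ℝ | L/2 ≤ a} = {L/2} := by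
      have : {a : ℝ | L/2 ≤ a} = Ici (L/2) := rfl
      rw [this, frontier_Ici]
    rw [hfr] at ha
    have haeq : a = L/2 := ha.2
    subst haeq
    have : 2 * (L/2) / L = 1 := by field_simp
    rw [this, Real.log_one]
    ring
  · exact ((continuous_id.sub continuous_const).continuousOn)
  · have hcl : closure {a : ℝ | ¬ (L/2 ≤ a)} = Iic (L/2) := by
      have : {a : ℝ | ¬ (L/2 ≤ a)} = Iio (L/2) := by ext; simp
      rw [this, closure_Iio]
    rw [hcl]
    apply ContinuousOn.div_const
    apply ContinuousOn.mul ?_ continuousOn_const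
    apply ContinuousOn.sub ?_ continuousOn_const
    apply ContinuousOn.log
    · exact ((continuous_const.mul continuous_id).div_const L).continuousOn
    · intro x hx
      have : 0 < x := (mem_of_mem_inter_left hx).1
      positivity

lemma mem_ann_facts {r : ℝ} (hr : 1 < r) {z : ℂ} (hz : z ∈ ann (1/r) 1) :
    0 < ‖z‖ ∧
    (Real.log r + Real.log (‖z‖)) ∈ Ioo 0 (Real.log r) := by
  have hr0 : (0:ℝ) < r := lt_trans one_pos hr
  have hs0 : 0 < ‖z‖ := lt_trans (by positivity) hz.1
  have h1 : Real.log (1/r) < Real.log (‖z‖) := Real.log_lt_log (by positivity) hz.1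
  have h2 : Real.log (‖z‖) < 0 := Real.log_neg hs0 hz.2
  rw [one_div, Real.log_inv] at h1
  exact ⟨hs0, ⟨by linarith, by linarith⟩⟩

lemma sqrt_le_iff_log {r : ℝ} (hr : 1 < r) {s : ℝ} (hs : 0 < s) :
    Real.sqrt (1/r) ≤ s ↔ Real.log r / 2 ≤ Real.log r + Real.log s := by
  have hr0 : (0:ℝ) < r := lt_trans one_pos hr
  have hsq : 0 < Real.sqrt (1/r) := Real.sqrt_pos.mpr (by positivity)
  rw [← Real.log_le_log_iff hsq hs, Real.log_sqrt (by positivity), one_div, Real.log_inv]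
  constructor <;> intro h <;> linarith

lemma wlim_eq {r : ℝ} (hr : 1 < r) {z : ℂ} (hz : z ∈ ann (1/r) 1) :
    wlim r z = ((Real.exp (H r (Real.log r + Real.log (‖z‖))) / ‖z‖ : ℝ) : ℂ) * z := by
  have hr0 : (0:ℝ) < r := lt_trans one_pos hr
  have hL : 0 < Real.log r := Real.log_pos hr
  obtain ⟨hs0, hx⟩ := mem_ann_facts hr hz
  set s := ‖z‖ with hsdef
  set x := Real.log r + Real.log s with hxdef
  have hlogrs : Real.log (r * s) = x := by
    rw [Real.log_mul (ne_of_gt hr0) (ne_of_gt hs0)]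
  unfold wlim H
  rw [hlogrs]
  by_cases hcond : Real.log r / 2 ≤ x
  · rw [if_pos ((sqrt_le_iff_log hr hs0).mpr hcond), if_pos hcond]
    have : Real.exp (x - Real.log r) = s := by
      rw [hxdef]; rw [show Real.log r + Real.log s - Real.log r = Real.log s by ring,
        Real.exp_log hs0]
    rw [this, div_self (ne_of_gt hs0)]
    simp
  · rw [if_neg (fun h => hcond ((sqrt_le_iff_log hr hs0).mp h)), if_neg hcond]
    rw [← hsdef]
    congr 2
    have hx0 : (0:ℝ) < x := hx.1
    rw [Real.log_div (ne_of_gt hL) (by positivity), Real.log_div (by positivity) (ne_of_gt hL)]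
    ring

lemma pinch_eq {r : ℝ} (hr : 1 < r) (t : ℝ) {z : ℂ} (hz : z ∈ ann (1/r) 1) :
    pinch r t ((r : ℂ) * z) / ((Real.rpow r (1 + t) : ℝ) : ℂ) =
      ((Real.exp (varrhoPos r t (Real.log r + Real.log (‖z‖)) - (1 + t) * Real.log r)
        / ‖z‖ : ℝ) : ℂ) * z := by
  have hr0 : (0:ℝ) < r := lt_trans one_pos hr
  have hL : 0 < Real.log r := Real.log_pos hr
  obtain ⟨hs0, hx⟩ := mem_ann_facts hr hz
  have hz0 : z ≠ 0 := by
    intro h; rw [h] at hs0; simp at hs0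
  set s := ‖z‖ with hsdef
  set x := Real.log r + Real.log s with hxdef
  have hrz0 : (r : ℂ) * z ≠ 0 := by
    apply mul_ne_zero _ hz0
    exact_mod_cast ne_of_gt hr0
  have habs : ‖(r:ℂ) * z‖ = r * s := by
    rw [norm_mul, Complex.norm_real, Real.norm_eq_abs, abs_of_pos hr0]
  have hlogrs : Real.log (r * s) = x := Real.log_mul (ne_of_gt hr0) (ne_of_gt hs0)
  have hvar : varrho r t (Real.log (‖(r:ℂ)*z‖)) = varrhoPos r t x := by
    rw [habs, hlogrs]
    unfold varrho
    rw [if_pos (le_of_lt hx.1)]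
  unfold pinch
  rw [if_neg hrz0, hvar, habs]
  have hrpow : Real.rpow r (1 + t) = Real.exp (Real.log r * (1 + t)) :=
    Real.rpow_def_of_pos hr0 _
  rw [hrpow]
  rw [Real.exp_sub]
  have he1 : Real.exp (varrhoPos r t x) ≠ 0 := Real.exp_ne_zero _
  have he2 : Real.exp (Real.log r * (1+t)) ≠ 0 := Real.exp_ne_zero _
  have hexp : Real.exp ((1+t) * Real.log r) = Real.exp (Real.log r * (1+t)) := by ring_nf
  rw [hexp]
  have hrc : (r:ℂ) ≠ 0 := by exact_mod_cast ne_of_gt hr0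
  have hsc : (s:ℂ) ≠ 0 := by exact_mod_cast ne_of_gt hs0
  push_cast
  field_simp

lemma key_bound {r t x : ℝ} (hr : 1 < r) (ht : 1 ≤ t) (hx : x ∈ Ioo 0 (Real.log r)) :
    |Real.exp (H r x) - Real.exp (varrhoPos r t x - (1 + t) * Real.log r)| ≤
      2 * Real.exp (-(1/2 + t) * Real.log r) := by
  have hL : 0 < Real.log r := Real.log_pos hr
  set L := Real.log r with hLdef
  by_cases hth : x ≤ L / (2 * Real.exp (2 * t))
  · -- small x : both terms are ≤ exp(-(1/2+t)L)
    have hexpt : (1:ℝ) < Real.exp (2 * t) := by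
      rw [← Real.exp_zero]
      exact Real.exp_lt_exp.mpr (by linarith)
    have hxlt : x < L / 2 := by
      have h2 : L / (2 * Real.exp (2*t)) < L / 2 := by
        apply div_lt_div_of_pos_left hL (by norm_num) (by linarith)
      linarith
    -- varrhoPos value
    have hv : varrhoPos r t x = Real.exp (2*t) * x := by
      unfold varrhoPos; rw [if_pos hth]
    have hvb : varrhoPos r t x - (1+t)*L ≤ -(1/2 + t) * L := by
      rw [hv]
      have : Real.exp (2*t) * x ≤ Real.exp (2*t) * (L / (2 * Real.exp (2*t))) :=
        mul_le_mul_of_nonneg_left hth (le_of_lt (lt_trans one_pos hexpt))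
      have h2 : Real.exp (2*t) * (L / (2 * Real.exp (2*t))) = L / 2 := by
        field_simp
      nlinarith
    have hHb : H r x ≤ -(1/2 + t) * L := by
      unfold H
      rw [if_neg (by linarith)]
      have h0 : 0 < 2 * x / L := by have := hx.1; positivity
      have h1 : 2 * x / L ≤ Real.exp (-(2*t)) := by
        rw [Real.exp_neg]
        rw [div_le_iff₀ hL]
        have h' : x * (2 * Real.exp (2*t)) ≤ L :=
          (le_div_iff₀ (by positivity)).mp hth
        rw [inv_mul_eq_div, le_div_iff₀ (by positivity)]
        nlinarith
      have h2 : Real.log (2 * x / L) ≤ -(2*t) := by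
        calc Real.log (2*x/L) ≤ Real.log (Real.exp (-(2*t))) := Real.log_le_log h0 h1
        _ = -(2*t) := Real.log_exp _
      nlinarith
    have e1 : Real.exp (H r x) ≤ Real.exp (-(1/2+t)*L) := Real.exp_le_exp.mpr hHb
    have e2 : Real.exp (varrhoPos r t x - (1+t)*L) ≤ Real.exp (-(1/2+t)*L) := Real.exp_le_exp.mpr hvb
    have p1 : (0:ℝ) < Real.exp (H r x) := Real.exp_pos _
    have p2 : (0:ℝ) < Real.exp (varrhoPos r t x - (1+t)*L) := Real.exp_pos _
    rw [abs_sub_le_iff]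
    constructor <;> linarith
  · -- big x : exact equality
    have heq : varrhoPos r t x - (1+t)*L = H r x := by
      unfold varrhoPos H
      rw [if_neg hth]
      by_cases h2 : x < L / 2
      · rw [if_pos h2, if_neg (by linarith)]
        ring
      · rw [if_neg h2, if_pos (by linarith)]
        ring
    rw [heq, sub_self, abs_zero]
    positivity

end PMLaux

/-- The maps `z ↦ w_{t,r}(rz)/r^{1+t}`, restricted to `𝔸(1/r,1)`,
converge uniformly as `t → ∞` to the homeomorphism `w : 𝔸(1/r,1) → 𝔻*` given by the
explicit formula `wlim`. -/
theorem pinching_model_limit (r : ℝ) (hr : 1 < r) :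
    TendstoUniformlyOn
      (fun (t : ℝ) (z : ℂ) => pinch r t ((r : ℂ) * z) / ((Real.rpow r (1 + t) : ℝ) : ℂ))
      (wlim r) Filter.atTop (ann (1 / r) 1) ∧
    ContinuousOn (wlim r) (ann (1 / r) 1) ∧
    Set.InjOn (wlim r) (ann (1 / r) 1) ∧
    wlim r '' ann (1 / r) 1 = {z : ℂ | 0 < ‖z‖ ∧ ‖z‖ < 1} := by
  have hr0 : (0:ℝ) < r := lt_trans one_pos hr
  have hL : 0 < Real.log r := Real.log_pos hr
  refine ⟨?_, ?_, ?_, ?_⟩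
  · -- uniform convergence
    rw [Metric.tendstoUniformlyOn_iff]
    intro ε hε
    have htend : Filter.Tendsto (fun t : ℝ => 2 * Real.exp (-(1/2 + t) * Real.log r))
        Filter.atTop (nhds 0) := by
      have h1 : Filter.Tendsto (fun t : ℝ => (1/2 + t) * Real.log r) Filter.atTop Filter.atTop :=
        (Filter.tendsto_atTop_add_const_left _ _ Filter.tendsto_id).atTop_mul_const hL
      have h2 : Filter.Tendsto (fun t : ℝ => -(1/2 + t) * Real.log r) Filter.atTop Filter.atBot := by
        have := (Filter.tendsto_neg_atTop_atBot).comp h1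
        refine this.congr (fun t => ?_)
        simp [Function.comp]; ring
      have h3 := Real.tendsto_exp_atBot.comp h2
      have h4 := h3.const_mul (2:ℝ)
      simpa using h4
    have hev : ∀ᶠ t in Filter.atTop, 2 * Real.exp (-(1/2 + t) * Real.log r) < ε :=
      htend.eventually_lt_const hε
    filter_upwards [hev, Filter.eventually_ge_atTop (1:ℝ)] with t hevt ht1
    intro z hz
    obtain ⟨hs0, hx⟩ := PMLaux.mem_ann_facts hr hz
    rw [PMLaux.wlim_eq hr hz, PMLaux.pinch_eq hr t hz]
    set s := ‖z‖ with hsdef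
    set a := Real.exp (PMLaux.H r (Real.log r + Real.log s)) with hadef
    set b := Real.exp (varrhoPos r t (Real.log r + Real.log s) - (1 + t) * Real.log r)
      with hbdef
    have hdist : dist (((a / s : ℝ) : ℂ) * z) (((b / s : ℝ) : ℂ) * z) = |a - b| := by
      rw [Complex.dist_eq]
      have heq2 : ((a / s : ℝ) : ℂ) * z - ((b / s : ℝ) : ℂ) * z = (((a - b) / s : ℝ) : ℂ) * z := by
        push_cast; ring
      rw [heq2, norm_mul, Complex.norm_real, Real.norm_eq_abs, abs_div, abs_of_pos hs0, ← hsdef,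
        div_mul_cancel₀ _ (ne_of_gt hs0)]
    rw [hdist]
    exact lt_of_le_of_lt (PMLaux.key_bound hr ht1 hx) hevt
  · -- continuity
    have hcont : ContinuousOn (fun z : ℂ =>
        ((Real.exp (PMLaux.H r (Real.log r + Real.log (‖z‖))) / ‖z‖ : ℝ) : ℂ) * z)
        (ann (1/r) 1) := by
      apply ContinuousOn.mul ?_ continuousOn_id
      apply Continuous.comp_continuousOn Complex.continuous_ofReal
      apply ContinuousOn.div ?_ continuous_norm.continuousOn
        (fun z hz => ne_of_gt (PMLaux.mem_ann_facts hr hz).1)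
      apply Continuous.comp_continuousOn Real.continuous_exp
      apply ContinuousOn.comp (PMLaux.H_cont hL) ?_ ?_
      · apply ContinuousOn.add continuousOn_const
        exact ContinuousOn.log continuous_norm.continuousOn
          (fun z hz => ne_of_gt (PMLaux.mem_ann_facts hr hz).1)
      · exact fun z hz => (PMLaux.mem_ann_facts hr hz).2
    exact hcont.congr (fun z hz => PMLaux.wlim_eq hr hz)
  · -- injectivity
    intro z1 h1 z2 h2 heq
    obtain ⟨hs1, hx1⟩ := PMLaux.mem_ann_facts hr h1
    obtain ⟨hs2, hx2⟩ := PMLaux.mem_ann_facts hr h2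
    rw [PMLaux.wlim_eq hr h1, PMLaux.wlim_eq hr h2] at heq
    have habs := congrArg Norm.norm heq
    rw [norm_mul, norm_mul, Complex.norm_real, Complex.norm_real, Real.norm_eq_abs, Real.norm_eq_abs,
      abs_of_pos (by positivity), abs_of_pos (by positivity),
      div_mul_cancel₀ _ (ne_of_gt hs1), div_mul_cancel₀ _ (ne_of_gt hs2)] at habs
    have hxx : Real.log r + Real.log (‖z1‖) = Real.log r + Real.log (‖z2‖) :=
      (PMLaux.H_mono hL).injOn hx1 hx2 (Real.exp_injective habs)
    have hss : ‖z1‖ = ‖z2‖ := by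
      have hl : Real.log (‖z1‖) = Real.log (‖z2‖) := by linarith
      rw [← Real.exp_log hs1, ← Real.exp_log hs2, hl]
    rw [hss] at heq
    have hne : ((Real.exp (PMLaux.H r (Real.log r + Real.log (‖z2‖)))
        / ‖z2‖ : ℝ) : ℂ) ≠ 0 := by
      rw [Complex.ofReal_ne_zero]
      positivity
    exact mul_left_cancel₀ hne heq
  · -- image
    ext w
    simp only [Set.mem_image, Set.mem_setOf_eq]
    constructor
    · rintro ⟨z, hz, rfl⟩
      obtain ⟨hs0, hx⟩ := PMLaux.mem_ann_facts hr hz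
      rw [PMLaux.wlim_eq hr hz, norm_mul, Complex.norm_real, Real.norm_eq_abs, abs_of_pos (by positivity),
        div_mul_cancel₀ _ (ne_of_gt hs0)]
      exact ⟨Real.exp_pos _, Real.exp_lt_one_iff.mpr (PMLaux.H_neg hL hx)⟩
    · rintro ⟨hw0, hw1⟩
      have hc : Real.log (‖w‖) < 0 := Real.log_neg hw0 hw1
      obtain ⟨x, hx, hHx⟩ := PMLaux.H_surj hL hc
      set s := Real.exp (x - Real.log r) with hsdef
      have hs0 : 0 < s := Real.exp_pos _
      have hw0' : ‖w‖ ≠ 0 := ne_of_gt hw0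
      have habs : ‖((s / ‖w‖ : ℝ) : ℂ) * w‖ = s := by
        rw [norm_mul, Complex.norm_real, Real.norm_eq_abs, abs_of_pos (by positivity),
          div_mul_cancel₀ _ hw0']
      have hzmem : ((s / ‖w‖ : ℝ) : ℂ) * w ∈ ann (1/r) 1 := by
        constructor
        · rw [habs, hsdef]
          have h1r : 1/r = Real.exp (-(Real.log r)) := by
            rw [Real.exp_neg, Real.exp_log hr0, one_div]
          rw [h1r]
          exact Real.exp_lt_exp.mpr (by linarith [hx.1])
        · rw [habs, hsdef]
          calc Real.exp (x - Real.log r) < Real.exp 0 :=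
                Real.exp_lt_exp.mpr (by linarith [hx.2])
          _ = 1 := Real.exp_zero
      refine ⟨((s / ‖w‖ : ℝ) : ℂ) * w, hzmem, ?_⟩
      rw [PMLaux.wlim_eq hr hzmem, habs]
      have hxs : Real.log r + Real.log s = x := by
        rw [hsdef, Real.log_exp]; ring
      rw [hxs, hHx, Real.exp_log hw0]
      have hne1 : (s : ℂ) ≠ 0 := by exact_mod_cast ne_of_gt hs0
      have hne2 : ((‖w‖ : ℝ) : ℂ) ≠ 0 := by exact_mod_cast hw0'
      push_cast
      field_simp
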